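/- For every integer k ≥ 2, Δ_k(1/√(8+8k)) < 0. -/

import Mathlib

/-- `C_k = (2k-2)!/(k-1)!` as a real number. -/
noncomputable def Cc (k : ℕ) : ℝ :=
  ((2 * k - 2).factorial : ℝ) / ((k - 1).factorial : ℝ)

/-- `p_k(z) = 1 − 2z − (7+8k)z²`. -/
noncomputable def Pp (k : ℕ) (z : ℝ) : ℝ := 1 - 2 * z - (7 + 8 * k) * z ^ 2

/-- `h_k(z) = 1 − z − C_k·z^{2k+1}`. -/
noncomputable def Hh (k : ℕ) (z : ℝ) : ℝ := 1 - z - Cc k * z ^ (2 * k + 1)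

/-- `Δ_k(z) = p_k(z) + 4·C_k·z^{2k+1}·h_k(z)`. -/
noncomputable def Dd (k : ℕ) (z : ℝ) : ℝ :=
  Pp k z + 4 * Cc k * z ^ (2 * k + 1) * Hh k z

lemma fact_bound (k : ℕ) (hk : 2 ≤ k) :
    4 * (2 * k - 2).factorial ≤ (k - 1).factorial * (8 + 8 * k) ^ k := by
  induction k, hk using Nat.le_induction with
  | base => decide
  | succ n hn ih =>
    obtain ⟨m, hm⟩ : ∃ m, 2 * n = m + 2 := ⟨2 * n - 2, by omega⟩
    obtain ⟨q, hq⟩ : ∃ q, n = q + 1 := ⟨n - 1, by omega⟩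
    have e1 : 2 * (n + 1) - 2 = m + 2 := by omega
    have e2 : (n + 1) - 1 = n := by omega
    have e3 : 2 * n - 2 = m := by omega
    rw [e3] at ih
    rw [e1, e2]
    have hfac : (m + 2).factorial = (m + 2) * ((m + 1) * m.factorial) := by
      rw [Nat.factorial_succ, Nat.factorial_succ]
    have hnfac : n.factorial = n * (n - 1).factorial := by
      rw [hq]; simp [Nat.factorial_succ]
    calc 4 * (m + 2).factorial
        = (m + 2) * (m + 1) * (4 * m.factorial) := by rw [hfac]; ring
      _ ≤ (m + 2) * (m + 1) * ((n - 1).factorial * (8 + 8 * n) ^ n) :=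
          Nat.mul_le_mul_left _ ih
      _ ≤ n * (16 + 8 * n) * ((n - 1).factorial * (8 + 8 * n) ^ n) := by
          apply Nat.mul_le_mul_right
          nlinarith [hm]
      _ ≤ n * (16 + 8 * n) * ((n - 1).factorial * (16 + 8 * n) ^ n) := by
          apply Nat.mul_le_mul_left
          apply Nat.mul_le_mul_left
          exact Nat.pow_le_pow_left (by omega) n
      _ = n.factorial * (8 + 8 * (n + 1)) ^ (n + 1) := by
          rw [hnfac]
          have : 8 + 8 * (n + 1) = 16 + 8 * n := by ring
          rw [this, pow_succ]
          ring

/-- For every integer `k ≥ 2`, `Δ_k(1/√(8+8k)) < 0`. -/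
theorem statement5 (k : ℕ) (hk : 2 ≤ k) :
    Dd k (1 / Real.sqrt (8 + 8 * k)) < 0 := by
  set N : ℝ := 8 + 8 * k with hN
  have hk2 : (2 : ℝ) ≤ k := by exact_mod_cast hk
  have hN1 : (24 : ℝ) ≤ N := by rw [hN]; linarith
  have hN0 : (0 : ℝ) < N := by linarith
  have hsN : (1 : ℝ) < Real.sqrt N := by
    rw [show (1:ℝ) = Real.sqrt 1 by simp]
    exact Real.sqrt_lt_sqrt (by norm_num) (by linarith)
  have hs0 : (0 : ℝ) < Real.sqrt N := by linarith
  set z : ℝ := 1 / Real.sqrt N with hzdef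
  have hz0 : 0 < z := by positivity
  have hz2 : z ^ 2 = 1 / N := by
    rw [hzdef, div_pow, one_pow, Real.sq_sqrt hN0.le]
  have hzp : z ^ (2 * k + 1) = z * (1 / N) ^ k := by
    rw [pow_succ, pow_mul, hz2, mul_comm]
  have hC : 0 < Cc k := by
    unfold Cc
    positivity
  -- 4 * Cc k ≤ N ^ k
  have hCb : 4 * Cc k ≤ N ^ k := by
    have hfb := fact_bound k hk
    have hfb' : (4 : ℝ) * ((2 * k - 2).factorial : ℝ) ≤
        ((k - 1).factorial : ℝ) * ((8 + 8 * k : ℕ) : ℝ) ^ k := by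
      exact_mod_cast hfb
    have hcast : ((8 + 8 * k : ℕ) : ℝ) = N := by push_cast [hN]; ring
    rw [hcast] at hfb'
    have hfp : (0 : ℝ) < ((k - 1).factorial : ℝ) := by positivity
    rw [Cc, mul_div_assoc', div_le_iff₀ hfp]
    linarith [hfb']
  set t : ℝ := Cc k * z ^ (2 * k + 1) with htdef
  have ht0 : 0 < t := by positivity
  have ht : 4 * t ≤ z := by
    rw [htdef, hzp]
    have hNk : (0 : ℝ) < N ^ k := by positivity
    have : 4 * (Cc k * (z * (1 / N) ^ k)) = z * ((4 * Cc k) / N ^ k) := by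
      rw [one_div, inv_pow]; ring
    rw [this]
    calc z * ((4 * Cc k) / N ^ k) ≤ z * 1 := by
          apply mul_le_mul_of_nonneg_left _ hz0.le
          rw [div_le_one hNk]; exact hCb
      _ = z := mul_one z
  have hp : Pp k z = 1 / N - 2 * z := by
    rw [Pp, hz2]
    have h7 : (7 + 8 * (k : ℝ)) = N - 1 := by rw [hN]; ring
    rw [h7]
    field_simp
    ring
  have hD : Dd k z = Pp k z + 4 * t * (1 - z - t) := by
    rw [Dd, Hh, htdef]; ring
  have hstep : Dd k z < Pp k z + 4 * t := by
    rw [hD]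
    nlinarith [ht0, hz0]
  have hNz : 1 / N < z := by
    rw [hzdef]
    apply one_div_lt_one_div_of_lt hs0
    nlinarith [Real.sq_sqrt hN0.le, hs0, hsN]
  have : Pp k z + 4 * t ≤ 1 / N - z := by rw [hp]; linarith
  linarith
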